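/- In the canonical game G(X₀): for any play (α,δ,ω)∈P and any formula ¬K_C φ ∈ hd(ω), there exists a play (α',δ',ω')∈P such that α∼_C α' and ¬φ∈hd(ω'). -/

import Mathlib

namespace DutyToWarn

/-- The language Φ: propositional variables, negation, implication,
distributed knowledge `K_C φ`, and second-order blameworthiness `B_C^D φ`. -/
inductive Formula (Agent V : Type) : Type
  | var : V → Formula Agent V
  | neg : Formula Agent V → Formula Agent V
  | imp : Formula Agent V → Formula Agent V → Formula Agent V
  | know : Set Agent → Formula Agent V → Formula Agent V
  | blame : Set Agent → Set Agent → Formula Agent V → Formula Agent V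

variable {Agent V B : Type}

namespace Formula

/-- φ ∨ ψ is defined through ¬ and → in the usual way: ¬φ → ψ. -/
def disj (φ ψ : Formula Agent V) : Formula Agent V := imp (neg φ) ψ

/-- φ ∧ ψ is defined through ¬ and → in the usual way: ¬(φ → ¬ψ). -/
def conj (φ ψ : Formula Agent V) : Formula Agent V := neg (imp φ (neg ψ))

/-- φ ↔ ψ is defined as (φ → ψ) ∧ (ψ → φ). -/
def biimp (φ ψ : Formula Agent V) : Formula Agent V := conj (imp φ ψ) (imp ψ φ)

/-- K̄_C φ abbreviates ¬ K_C ¬ φ. -/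
def dknow (C : Set Agent) (φ : Formula Agent V) : Formula Agent V := neg (know C (neg φ))

end Formula

/-- The Boolean constant ⊥, defined through ¬ and →. -/
def falsum [Inhabited V] : Formula Agent V :=
  Formula.neg (Formula.imp (Formula.var default) (Formula.var default))

/-- The disjunction χ₁ ∨ … ∨ χₙ of a list of formulas; for n = 0 it is ⊥. -/
def bigOr [Inhabited V] : List (Formula Agent V) → Formula Agent V
  | [] => falsum
  | [φ] => φ
  | φ :: ψ :: l => φ.disj (bigOr (ψ :: l))

/-- A propositional valuation: any assignment of truth values to formulas
that respects negation and implication (treating K- and B-formulas as atoms). -/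
def IsPropValuation (v : Formula Agent V → Prop) : Prop :=
  (∀ φ : Formula Agent V, v φ.neg ↔ ¬ v φ) ∧
    ∀ φ ψ : Formula Agent V, v (φ.imp ψ) ↔ (v φ → v ψ)

/-- A propositional tautology in the language Φ. -/
def Tautology (φ : Formula Agent V) : Prop :=
  ∀ v : Formula Agent V → Prop, IsPropValuation v → v φ

/-- ⊢ φ : provability from the axioms using Modus Ponens and Necessitation. -/
inductive Provable : Formula Agent V → Prop
  | taut {φ : Formula Agent V} : Tautology φ → Provable φ
  | truthK {C : Set Agent} {φ : Formula Agent V} :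
      Provable ((Formula.know C φ).imp φ)
  | truthB {C D : Set Agent} {φ : Formula Agent V} :
      Provable ((Formula.blame C D φ).imp φ)
  | distr {C : Set Agent} {φ ψ : Formula Agent V} :
      Provable ((Formula.know C (φ.imp ψ)).imp ((Formula.know C φ).imp (Formula.know C ψ)))
  | negIntro {C : Set Agent} {φ : Formula Agent V} :
      Provable ((Formula.know C φ).neg.imp (Formula.know C (Formula.know C φ).neg))
  | monoK {C E : Set Agent} {φ : Formula Agent V} (h : C ⊆ E) :
      Provable ((Formula.know C φ).imp (Formula.know E φ))
  | monoB {C D E F : Set Agent} {φ : Formula Agent V} (h1 : C ⊆ E) (h2 : D ⊆ F) :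
      Provable ((Formula.blame C D φ).imp (Formula.blame E F φ))
  | noneToAct {C : Set Agent} {φ : Formula Agent V} :
      Provable (Formula.neg (Formula.blame C ∅ φ))
  | jointResp {C D E F : Set Agent} {φ ψ : Formula Agent V} (h : D ∩ F = ∅) :
      Provable (((Formula.dknow C (Formula.blame C D φ)).conj
        (Formula.dknow E (Formula.blame E F ψ))).imp
        ((φ.disj ψ).imp (Formula.blame (C ∪ E) (D ∪ F) (φ.disj ψ))))
  | strictCond {C D : Set Agent} {φ ψ : Formula Agent V} :
      Provable ((Formula.know C (φ.imp ψ)).imp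
        ((Formula.blame C D ψ).imp (φ.imp (Formula.blame C D φ))))
  | introB {C D : Set Agent} {φ : Formula Agent V} :
      Provable ((Formula.blame C D φ).imp (Formula.know C (φ.imp (Formula.blame C D φ))))
  | mp {φ ψ : Formula Agent V} : Provable (φ.imp ψ) → Provable φ → Provable ψ
  | nec {C : Set Agent} {φ : Formula Agent V} : Provable φ → Provable (Formula.know C φ)

/-- X ⊢ φ : provability from the theorems of the system together with the
additional hypotheses X, using only Modus Ponens. -/
inductive ProvableFrom (X : Set (Formula Agent V)) : Formula Agent V → Prop
  | hyp {φ : Formula Agent V} (h : φ ∈ X) : ProvableFrom X φ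
  | thm {φ : Formula Agent V} (h : Provable φ) : ProvableFrom X φ
  | mp {φ ψ : Formula Agent V} (h1 : ProvableFrom X (φ.imp ψ)) (h2 : ProvableFrom X φ) :
      ProvableFrom X ψ

/-- A game (Definition 1). -/
structure Game (Agent V : Type) where
  I : Type
  Δ : Type
  Ω : Type
  sim : Agent → I → I → Prop
  sim_equiv : ∀ a : Agent, Equivalence (sim a)
  P : Set (I × (Agent → Δ) × Ω)
  play_exists : ∀ (α : I) (δ : Agent → Δ), ∃ ω : Ω, (α, δ, ω) ∈ P
  π : V → Set (I × (Agent → Δ) × Ω)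
  π_sub : ∀ p : V, π p ⊆ P

/-- α ∼_C α' : indistinguishability by a coalition. -/
def Game.simC (G : Game Agent V) (C : Set Agent) (α α' : G.I) : Prop :=
  ∀ a ∈ C, G.sim a α α'

/-- Satisfiability (α,δ,ω) ⊩ φ (Definition 2). -/
def Game.Sat (G : Game Agent V) :
    Formula Agent V → (G.I × (Agent → G.Δ) × G.Ω) → Prop
  | Formula.var p, x => x ∈ G.π p
  | Formula.neg φ, x => ¬ G.Sat φ x
  | Formula.imp φ ψ, x => G.Sat φ x → G.Sat ψ x
  | Formula.know C φ, x => ∀ x' ∈ G.P, G.simC C x.1 x'.1 → G.Sat φ x'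
  | Formula.blame C D φ, x => G.Sat φ x ∧
      ∃ s : Agent → G.Δ, ∀ x' ∈ G.P, G.simC C x.1 x'.1 →
        (∀ a ∈ D, s a = x'.2.1 a) → ¬ G.Sat φ x'

/-- A set of formulas is consistent if no contradiction is derivable from it. -/
def Consistent (X : Set (Formula Agent V)) : Prop :=
  ¬ ∃ φ : Formula Agent V, ProvableFrom X φ ∧ ProvableFrom X φ.neg

/-- A maximal consistent set: consistent with no proper consistent extension. -/
def MaxConsistent (X : Set (Formula Agent V)) : Prop :=
  Consistent X ∧ ∀ Y : Set (Formula Agent V), X ⊆ Y → Consistent Y → Y = X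

/-- One step (Cᵢ,bᵢ),Xᵢ of a sequence in the set of outcomes of the canonical game. -/
abbrev Step (Agent V B : Type) : Type := Set Agent × B × Set (Formula Agent V)

/-- Validity of a sequence X₀,(C₁,b₁),X₁,…,(Cₙ,bₙ),Xₙ : each Xᵢ is maximal
consistent and {φ | K_{Cᵢ} φ ∈ X_{i-1}} ⊆ Xᵢ. -/
def ValidSeq (X₀ : Set (Formula Agent V)) : List (Step Agent V B) → Prop
  | [] => True
  | (C, _, X) :: l =>
      MaxConsistent X ∧ (∀ φ : Formula Agent V, Formula.know C φ ∈ X₀ → φ ∈ X) ∧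
        ValidSeq X l

/-- The set Ω of outcomes of the canonical game G(X₀): valid sequences starting at X₀
(the sequence of steps after X₀ is recorded). -/
def COutcome (X₀ : Set (Formula Agent V)) (B : Type) : Type :=
  {l : List (Step Agent V B) // ValidSeq X₀ l}

/-- The last maximal consistent set of a sequence. -/
def hdSeq (X₀ : Set (Formula Agent V)) : List (Step Agent V B) → Set (Formula Agent V)
  | [] => X₀
  | (_, _, X) :: l => hdSeq X l

/-- hd(ω) : the last maximal consistent set of the outcome ω. -/
def chd {X₀ : Set (Formula Agent V)} (ω : COutcome X₀ B) : Set (Formula Agent V) :=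
  hdSeq X₀ ω.1

/-- ω ∼_a ω' in the Tree of Knowledge: all edges along the unique path between
ω and ω' are labeled with agent a, i.e. there is a common ancestor w such that
every edge from w down to ω and from w down to ω' is labeled with a. -/
def csimA {X₀ : Set (Formula Agent V)} (a : Agent) (u v : COutcome X₀ B) : Prop :=
  ∃ w t t' : List (Step Agent V B),
    u.1 = w ++ t ∧ v.1 = w ++ t' ∧ (∀ s ∈ t, a ∈ s.1) ∧ (∀ s ∈ t', a ∈ s.1)

/-- ω ∼_C ω' iff ω ∼_a ω' for each a ∈ C. -/
def csimC {X₀ : Set (Formula Agent V)} (C : Set Agent) (u v : COutcome X₀ B) : Prop :=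
  ∀ a ∈ C, csimA a u v

/-- The relation ∼_𝒜 on outcomes. -/
def crel (X₀ : Set (Formula Agent V)) (B : Type) : COutcome X₀ B → COutcome X₀ B → Prop :=
  csimC (Set.univ : Set Agent)

/-- The set I of initial states of the canonical game: I = Ω/∼_𝒜. -/
def CI (X₀ : Set (Formula Agent V)) (B : Type) : Type :=
  Quot (crel X₀ B)

/-- The equivalence class of an outcome. -/
def ctoI {X₀ : Set (Formula Agent V)} (u : COutcome X₀ B) : CI X₀ B :=
  Quot.mk (crel X₀ B) u

/-- The relation α ∼_C α' on I, induced on representatives. -/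
def IsimC {X₀ : Set (Formula Agent V)} (C : Set Agent) (α α' : CI X₀ B) : Prop :=
  ∃ u v : COutcome X₀ B, ctoI u = α ∧ ctoI v = α' ∧ csimC C u v

/-- The domain of actions of the canonical game: Δ = {(φ,C,ω)}. -/
abbrev CAct (X₀ : Set (Formula Agent V)) (B : Type) : Type :=
  Formula Agent V × Set Agent × COutcome X₀ B

/-- Triples (α, δ, ω) over the canonical game. -/
abbrev CPlay (X₀ : Set (Formula Agent V)) (B : Type) : Type :=
  CI X₀ B × (Agent → CAct X₀ B) × COutcome X₀ B

/-- The set P of plays of the canonical game (Definition 13). -/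
def CP (X₀ : Set (Formula Agent V)) (B : Type) : Set (CPlay X₀ B) :=
  {x | ctoI x.2.2 = x.1 ∧
    ∀ (v : COutcome X₀ B) (C D : Set Agent) (ψ : Formula Agent V),
      Formula.dknow C (Formula.blame C D ψ) ∈ chd v →
      (∀ a ∈ D, x.2.1 a = (ψ, C, v)) →
      csimC C x.2.2 v →
      Formula.neg ψ ∈ chd x.2.2}

/-- π(p) in the canonical game. -/
def Cπ (X₀ : Set (Formula Agent V)) (B : Type) (p : V) : Set (CPlay X₀ B) :=
  {x | x ∈ CP X₀ B ∧ Formula.var p ∈ chd x.2.2}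

/-- Satisfiability in the canonical game G(X₀) (Definition 2 instantiated). -/
def CSat (X₀ : Set (Formula Agent V)) (B : Type) :
    Formula Agent V → CPlay X₀ B → Prop
  | Formula.var p, x => x ∈ Cπ X₀ B p
  | Formula.neg φ, x => ¬ CSat X₀ B φ x
  | Formula.imp φ ψ, x => CSat X₀ B φ x → CSat X₀ B ψ x
  | Formula.know C φ, x => ∀ x' ∈ CP X₀ B, IsimC C x.1 x'.1 → CSat X₀ B φ x'
  | Formula.blame C D φ, x => CSat X₀ B φ x ∧
      ∃ s : Agent → CAct X₀ B, ∀ x' ∈ CP X₀ B, IsimC C x.1 x'.1 →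
        (∀ a ∈ D, s a = x'.2.1 a) → ¬ CSat X₀ B φ x'

/-! ### Auxiliary lemmas -/

theorem pf_mono {X Y : Set (Formula Agent V)} (hXY : X ⊆ Y) {φ : Formula Agent V}
    (h : ProvableFrom X φ) : ProvableFrom Y φ := by
  induction h with
  | hyp h => exact ProvableFrom.hyp (hXY h)
  | thm h => exact ProvableFrom.thm h
  | mp _ _ ih1 ih2 => exact ProvableFrom.mp ih1 ih2

theorem taut_imp_self (φ : Formula Agent V) : Tautology (φ.imp φ) := by
  intro v hv; rw [hv.2]; exact id

theorem taut_K (φ ψ : Formula Agent V) : Tautology (ψ.imp (φ.imp ψ)) := by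
  intro v hv; rw [hv.2, hv.2]; tauto

theorem taut_S (φ a b : Formula Agent V) :
    Tautology ((φ.imp (a.imp b)).imp ((φ.imp a).imp (φ.imp b))) := by
  intro v hv; simp only [hv.2]; tauto

theorem taut_exfalso (χ φ : Formula Agent V) : Tautology (χ.imp (χ.neg.imp φ)) := by
  intro v hv; simp only [hv.2, hv.1]; tauto

theorem taut_clavius (φ : Formula Agent V) : Tautology ((φ.neg.imp φ).imp φ) := by
  intro v hv; simp only [hv.2, hv.1]; tauto

/-- Deduction theorem. -/
theorem deduction {X : Set (Formula Agent V)} {φ ψ : Formula Agent V}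
    (h : ProvableFrom (insert φ X) ψ) : ProvableFrom X (φ.imp ψ) := by
  induction h with
  | @hyp χ h =>
    rcases h with h | h
    · subst h; exact ProvableFrom.thm (Provable.taut (taut_imp_self _))
    · exact ProvableFrom.mp (ProvableFrom.thm (Provable.taut (taut_K φ χ)))
        (ProvableFrom.hyp h)
  | @thm χ h =>
    exact ProvableFrom.mp (ProvableFrom.thm (Provable.taut (taut_K φ χ)))
      (ProvableFrom.thm h)
  | @mp a b _ _ ih1 ih2 =>
    exact ProvableFrom.mp (ProvableFrom.mp
      (ProvableFrom.thm (Provable.taut (taut_S φ a b))) ih1) ih2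

theorem provable_of_pf_empty {φ : Formula Agent V}
    (h : ProvableFrom (∅ : Set (Formula Agent V)) φ) : Provable φ := by
  induction h with
  | hyp h => exact absurd h (Set.notMem_empty _)
  | thm h => exact h
  | mp _ _ ih1 ih2 => exact Provable.mp ih1 ih2

/-- Compactness: a derivation uses finitely many hypotheses. -/
theorem pf_list {X : Set (Formula Agent V)} {φ : Formula Agent V}
    (h : ProvableFrom X φ) :
    ∃ L : List (Formula Agent V), (∀ ψ ∈ L, ψ ∈ X) ∧
      ProvableFrom {ψ | ψ ∈ L} φ := by
  induction h with
  | @hyp χ h =>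
    exact ⟨[χ], by simp [h], ProvableFrom.hyp (by simp)⟩
  | @thm χ h => exact ⟨[], by simp, ProvableFrom.thm h⟩
  | @mp a b _ _ ih1 ih2 =>
    obtain ⟨L1, hL1, hp1⟩ := ih1
    obtain ⟨L2, hL2, hp2⟩ := ih2
    refine ⟨L1 ++ L2, ?_, ProvableFrom.mp (pf_mono ?_ hp1) (pf_mono ?_ hp2)⟩
    · intro ψ hψ; rcases List.mem_append.1 hψ with h | h
      exacts [hL1 ψ h, hL2 ψ h]
    · intro ψ hψ; simp only [Set.mem_setOf_eq, List.mem_append]; exact Or.inl hψ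
    · intro ψ hψ; simp only [Set.mem_setOf_eq, List.mem_append]; exact Or.inr hψ

/-- From a derivation of χ from formulas all known (in Y) by coalition C,
derive K_C χ from Y. -/
theorem pf_know {Y : Set (Formula Agent V)} {C : Set Agent}
    (L : List (Formula Agent V)) (hL : ∀ ψ ∈ L, Formula.know C ψ ∈ Y)
    {χ : Formula Agent V} (h : ProvableFrom {ψ | ψ ∈ L} χ) :
    ProvableFrom Y (Formula.know C χ) := by
  induction L generalizing χ with
  | nil =>
    have : ProvableFrom (∅ : Set (Formula Agent V)) χ := by
      refine pf_mono ?_ h; intro ψ hψ; simp at hψ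
    exact ProvableFrom.thm (Provable.nec (provable_of_pf_empty this))
  | cons a L ih =>
    have hins : ProvableFrom (insert a {ψ | ψ ∈ L}) χ := by
      refine pf_mono ?_ h; intro ψ hψ; simp only [Set.mem_setOf_eq, List.mem_cons] at hψ
      simpa using hψ
    have h1 : ProvableFrom {ψ | ψ ∈ L} (a.imp χ) := deduction hins
    have h2 : ProvableFrom Y (Formula.know C (a.imp χ)) :=
      ih (fun ψ hψ => hL ψ (List.mem_cons_of_mem _ hψ)) h1
    exact ProvableFrom.mp (ProvableFrom.mp (ProvableFrom.thm Provable.distr) h2)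
      (ProvableFrom.hyp (hL a List.mem_cons_self))

/-- In a chain, any finite list of elements of the union lies in one member. -/
theorem chain_list {c : Set (Set (Formula Agent V))} (hc : IsChain (· ⊆ ·) c)
    (hne : c.Nonempty) (L : List (Formula Agent V)) (hL : ∀ ψ ∈ L, ψ ∈ ⋃₀ c) :
    ∃ M ∈ c, ∀ ψ ∈ L, ψ ∈ M := by
  induction L with
  | nil => exact ⟨hne.choose, hne.choose_spec, by simp⟩
  | cons a L ih =>
    obtain ⟨M, hM, hLM⟩ := ih (fun ψ hψ => hL ψ (List.mem_cons_of_mem _ hψ))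
    obtain ⟨M', hM', haM'⟩ := hL a List.mem_cons_self
    rcases eq_or_ne M M' with rfl | hne'
    · exact ⟨M, hM, by intro ψ hψ; rcases List.mem_cons.1 hψ with rfl | h
                       exacts [haM', hLM ψ h]⟩
    rcases hc hM hM' hne' with hsub | hsub
    · exact ⟨M', hM', by intro ψ hψ; rcases List.mem_cons.1 hψ with rfl | h
                         exacts [haM', hsub (hLM ψ h)]⟩
    · exact ⟨M, hM, by intro ψ hψ; rcases List.mem_cons.1 hψ with rfl | h
                       exacts [hsub haM', hLM ψ h]⟩

/-- Lindenbaum's lemma. -/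
theorem lindenbaum {S : Set (Formula Agent V)} (hS : Consistent S) :
    ∃ X : Set (Formula Agent V), S ⊆ X ∧ MaxConsistent X := by
  obtain ⟨m, hSm, hm⟩ := zorn_subset_nonempty {X : Set (Formula Agent V) | Consistent X}
    (fun c hcS hchain hcne => by
      refine ⟨⋃₀ c, ?_, fun s hs => Set.subset_sUnion_of_mem hs⟩
      rintro ⟨χ, h1, h2⟩
      obtain ⟨L1, hL1, hp1⟩ := pf_list h1
      obtain ⟨L2, hL2, hp2⟩ := pf_list h2
      obtain ⟨M, hMc, hM⟩ := chain_list hchain hcne (L1 ++ L2) (by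
        intro ψ hψ; rcases List.mem_append.1 hψ with h | h
        exacts [hL1 ψ h, hL2 ψ h])
      refine hcS hMc ⟨χ, ?_, ?_⟩
      · exact pf_mono (fun ψ hψ => hM ψ (List.mem_append.2 (Or.inl hψ))) hp1
      · exact pf_mono (fun ψ hψ => hM ψ (List.mem_append.2 (Or.inr hψ))) hp2)
    S hS
  exact ⟨m, hSm, hm.1, fun Y hmY hY => (hm.2 hY hmY).antisymm hmY⟩

/-- The head of a valid sequence is maximal consistent. -/
theorem hd_maxcons {X₀ : Set (Formula Agent V)} (hX₀ : MaxConsistent X₀)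
    (l : List (Step Agent V B)) (hl : ValidSeq X₀ l) :
    MaxConsistent (hdSeq X₀ l) := by
  induction l generalizing X₀ with
  | nil => exact hX₀
  | cons s l ih =>
    obtain ⟨C, b, X⟩ := s
    exact ih hl.1 hl.2.2

theorem hdSeq_append {X₀ : Set (Formula Agent V)} (l : List (Step Agent V B))
    (s : Step Agent V B) : hdSeq X₀ (l ++ [s]) = s.2.2 := by
  induction l generalizing X₀ with
  | nil => rfl
  | cons t l ih => obtain ⟨C, b, X⟩ := t; exact ih

theorem validSeq_append {X₀ : Set (Formula Agent V)} (l : List (Step Agent V B))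
    (hl : ValidSeq X₀ l) (C : Set Agent) (b : B) {X : Set (Formula Agent V)}
    (hX : MaxConsistent X) (hk : ∀ ψ : Formula Agent V, Formula.know C ψ ∈ hdSeq X₀ l → ψ ∈ X) :
    ValidSeq X₀ (l ++ [(C, b, X)]) := by
  induction l generalizing X₀ with
  | nil => exact ⟨hX, hk, trivial⟩
  | cons t l ih =>
    obtain ⟨C', b', X'⟩ := t
    exact ⟨hl.1, hl.2.1, ih hl.2.2 hk⟩

/-- Lemma 18: in the canonical game G(X₀), for any play (α,δ,ω) ∈ P and
    any formula ¬K_C φ ∈ hd(ω), there is a play (α',δ',ω') ∈ P such that α ∼_C α' and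
    ¬φ ∈ hd(ω'). -/
theorem N_child_exists {Agent V B : Type}
    (hB : Cardinal.mk Agent < Cardinal.mk B)
    (X₀ : Set (Formula Agent V)) (hX₀ : MaxConsistent X₀)
    (x : CPlay X₀ B) (hx : x ∈ CP X₀ B) (C : Set Agent) (φ : Formula Agent V)
    (h : Formula.neg (Formula.know C φ) ∈ chd x.2.2) :
    ∃ x' ∈ CP X₀ B, IsimC C x.1 x'.1 ∧ Formula.neg φ ∈ chd x'.2.2 := by
  classical
  -- B is nonempty
  have hBne : Nonempty B := by
    rw [← Cardinal.mk_ne_zero_iff]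
    intro h0
    exact (not_lt_of_ge (Cardinal.zero_le _)) (h0 ▸ hB)
  obtain ⟨b⟩ := hBne
  set Y := chd x.2.2 with hYdef
  have hYmax : MaxConsistent Y := hd_maxcons hX₀ x.2.2.1 x.2.2.2
  -- the set {ψ | K_C ψ ∈ Y} ∪ {¬φ} is consistent
  set T : Set (Formula Agent V) := {ψ | Formula.know C ψ ∈ Y} with hTdef
  have hcons : Consistent (insert φ.neg T) := by
    rintro ⟨χ, h1, h2⟩
    -- derive φ from insert φ.neg T
    have hφ : ProvableFrom (insert φ.neg T) φ :=
      ProvableFrom.mp (ProvableFrom.mp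
        (ProvableFrom.thm (Provable.taut (taut_exfalso χ φ))) h1) h2
    have h3 : ProvableFrom T (φ.neg.imp φ) := deduction hφ
    have h4 : ProvableFrom T φ :=
      ProvableFrom.mp (ProvableFrom.thm (Provable.taut (taut_clavius φ))) h3
    obtain ⟨L, hL, hp⟩ := pf_list h4
    have h5 : ProvableFrom Y (Formula.know C φ) := pf_know L (fun ψ hψ => hL ψ hψ) hp
    exact hYmax.1 ⟨Formula.know C φ, h5, ProvableFrom.hyp h⟩
  obtain ⟨X', hSX', hX'max⟩ := lindenbaum hcons
  have hnegφ : φ.neg ∈ X' := hSX' (Set.mem_insert _ _)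
  have hkX' : ∀ ψ : Formula Agent V, Formula.know C ψ ∈ Y → ψ ∈ X' :=
    fun ψ hψ => hSX' (Set.mem_insert_of_mem _ hψ)
  -- construct the new outcome
  set ω' : COutcome X₀ B :=
    ⟨x.2.2.1 ++ [(C, b, X')], validSeq_append x.2.2.1 x.2.2.2 C b hX'max hkX'⟩ with hω'
  have hchd : chd ω' = X' := hdSeq_append x.2.2.1 (C, b, X')
  have hsim : csimC C x.2.2 ω' := by
    intro a ha
    exact ⟨x.2.2.1, [], [(C, b, X')], (List.append_nil _).symm, rfl,
      by simp, by simpa using ha⟩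
  -- the strategy profile: every agent plays (φ, ∅, ω')
  set δ' : Agent → CAct X₀ B := fun _ => (φ, ∅, ω') with hδ'
  refine ⟨(ctoI ω', δ', ω'), ⟨rfl, ?_⟩, ?_, by rw [show (ctoI ω', δ', ω').2.2 = ω' from rfl, hchd]; exact hnegφ⟩
  · -- condition (ii) of plays
    intro v C' D ψ hdk hδD hsimv
    rcases Set.eq_empty_or_nonempty D with rfl | ⟨a, ha⟩
    · -- D = ∅ : contradiction with None to Act
      exfalso
      have hvmax : MaxConsistent (chd v) := hd_maxcons hX₀ v.1 v.2
      have hthm : ProvableFrom (chd v)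
          (Formula.know C' (Formula.neg (Formula.blame C' ∅ ψ))) :=
        ProvableFrom.thm (Provable.nec Provable.noneToAct)
      exact hvmax.1 ⟨_, hthm, ProvableFrom.hyp hdk⟩
    · -- D nonempty : then ψ = φ and v = ω'
      have heq : ((φ, (∅ : Set Agent), ω') : CAct X₀ B) = (ψ, C', v) := hδD a ha
      have hψφ : φ = ψ := congrArg Prod.fst heq
      rw [show (ctoI ω', δ', ω').2.2 = ω' from rfl, hchd, ← hψφ]
      exact hnegφ
  · -- α ∼_C α'
    exact ⟨x.2.2, ω', hx.1, rfl, hsim⟩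


end DutyToWarn
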